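/- arXiv:2304.01351 — 2 statements merged into one kernel-verified Lean document; each statement's English description precedes it below -/
import Mathlib

section
/- Let A be an N × M complex matrix, α, λ > 0, 0 < m < 1, and let H : ℂ^M → ℂ^M be Lipschitz with constant at most 1 − m. Define T_MOL : ℂ^M → ℂ^M by T_MOL(x) = (I + αλ AᴴA)⁻¹((1 − α)x + αH(x)). Then T_MOL is Lipschitz with constant at most √(1 − 2αm + α²(2 − m)²). -/
open Matrix

/-- The linear action of a complex matrix on Euclidean space. -/
noncomputable def appM {N M : ℕ} (A : Matrix (Fin N) (Fin M) ℂ)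
    (x : EuclideanSpace ℂ (Fin M)) : EuclideanSpace ℂ (Fin N) :=
  Matrix.toEuclideanLin A x


lemma tE_mul {N M K : ℕ} (B : Matrix (Fin N) (Fin M) ℂ) (C : Matrix (Fin M) (Fin K) ℂ)
    (v : EuclideanSpace ℂ (Fin K)) :
    Matrix.toEuclideanLin (B * C) v = Matrix.toEuclideanLin B (Matrix.toEuclideanLin C v) := by
  simp [Matrix.toEuclideanLin_apply, Matrix.mulVec_mulVec]

lemma tE_one {M : ℕ} (v : EuclideanSpace ℂ (Fin M)) :
    Matrix.toEuclideanLin (1 : Matrix (Fin M) (Fin M) ℂ) v = v := by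
  simp [Matrix.toEuclideanLin_apply, Matrix.one_mulVec]

-- norm lower bound for B = 1 + c • AᴴA
lemma norm_le_appB {N M : ℕ} (A : Matrix (Fin N) (Fin M) ℂ) (c : ℝ) (hc : 0 ≤ c)
    (w : EuclideanSpace ℂ (Fin M)) :
    ‖w‖ ≤ ‖Matrix.toEuclideanLin (1 + (c : ℂ) • (Aᴴ * A)) w‖ := by
  set B := (1 + (c : ℂ) • (Aᴴ * A)) with hB
  have hBw : Matrix.toEuclideanLin B w
      = w + (c : ℂ) • Matrix.toEuclideanLin Aᴴ (Matrix.toEuclideanLin A w) := by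
    rw [hB, map_add, _root_.map_smul]
    simp only [LinearMap.add_apply, LinearMap.smul_apply, tE_one, tE_mul]
  have hadj : (inner ℂ w (Matrix.toEuclideanLin Aᴴ (Matrix.toEuclideanLin A w)) : ℂ)
      = inner ℂ (Matrix.toEuclideanLin A w) (Matrix.toEuclideanLin A w) := by
    rw [Matrix.toEuclideanLin_conjTranspose_eq_adjoint, LinearMap.adjoint_inner_right]
  have hre : (inner ℂ w (Matrix.toEuclideanLin B w) : ℂ).re
      = ‖w‖ ^ 2 + c * ‖Matrix.toEuclideanLin A w‖ ^ 2 := by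
    rw [hBw, inner_add_right, inner_smul_right, hadj,
      inner_self_eq_norm_sq_to_K, inner_self_eq_norm_sq_to_K]
    simp [← Complex.ofReal_pow]
  have h1 : ‖w‖ ^ 2 ≤ (inner ℂ w (Matrix.toEuclideanLin B w) : ℂ).re := by
    rw [hre]
    nlinarith [sq_nonneg ‖Matrix.toEuclideanLin A w‖]
  have h2 : (inner ℂ w (Matrix.toEuclideanLin B w) : ℂ).re
      ≤ ‖w‖ * ‖Matrix.toEuclideanLin B w‖ := by
    simpa using re_inner_le_norm (𝕜 := ℂ) w (Matrix.toEuclideanLin B w)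
  nlinarith [norm_nonneg w, norm_nonneg (Matrix.toEuclideanLin B w)]

lemma appBinv_le {N M : ℕ} (A : Matrix (Fin N) (Fin M) ℂ) (c : ℝ) (hc : 0 ≤ c)
    (v : EuclideanSpace ℂ (Fin M)) :
    ‖Matrix.toEuclideanLin (1 + (c : ℂ) • (Aᴴ * A))⁻¹ v‖ ≤ ‖v‖ := by
  set B := (1 + (c : ℂ) • (Aᴴ * A)) with hB
  have hinj : Function.Injective (B.mulVec) := by
    intro u u' h
    have h2 : Matrix.toEuclideanLin B ((WithLp.equiv 2 _).symm u)
        = Matrix.toEuclideanLin B ((WithLp.equiv 2 _).symm u') := by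
      simp [Matrix.toEuclideanLin_apply, h]
    have h3 : ((WithLp.equiv 2 (Fin M → ℂ)).symm u : EuclideanSpace ℂ (Fin M))
        = (WithLp.equiv 2 (Fin M → ℂ)).symm u' := by
      have := norm_le_appB A c hc ((WithLp.equiv 2 _).symm u - (WithLp.equiv 2 _).symm u')
      rw [map_sub, h2, sub_self, norm_zero] at this
      have h0 : ‖(WithLp.equiv 2 (Fin M → ℂ)).symm u - (WithLp.equiv 2 (Fin M → ℂ)).symm u'‖ = 0 :=
        le_antisymm this (norm_nonneg _)
      exact sub_eq_zero.mp (norm_eq_zero.mp h0)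
    exact (WithLp.equiv 2 (Fin M → ℂ)).symm.injective h3
  have hunit : IsUnit B := Matrix.mulVec_injective_iff_isUnit.mp hinj
  have hBB : B * B⁻¹ = 1 := Matrix.mul_nonsing_inv B (Matrix.isUnit_iff_isUnit_det B |>.mp hunit)
  have key : Matrix.toEuclideanLin B (Matrix.toEuclideanLin B⁻¹ v) = v := by
    rw [← tE_mul, hBB, tE_one]
  calc ‖Matrix.toEuclideanLin B⁻¹ v‖
      ≤ ‖Matrix.toEuclideanLin B (Matrix.toEuclideanLin B⁻¹ v)‖ := norm_le_appB A c hc _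
    _ = ‖v‖ := by rw [key]

/-- With `α, λ > 0`, `0 < m < 1`, and `H` Lipschitz with constant
at most `1 − m`, the map `T_MOL(x) = (I + αλ AᴴA)⁻¹((1 − α)x + αH(x))` is
Lipschitz with constant at most `√(1 − 2αm + α²(2 − m)²)`. -/
theorem stmt8 {N M : ℕ} (A : Matrix (Fin N) (Fin M) ℂ) (α lam m : ℝ)
    (hα : 0 < α) (hlam : 0 < lam) (hm0 : 0 < m) (hm1 : m < 1)
    (H : EuclideanSpace ℂ (Fin M) → EuclideanSpace ℂ (Fin M))
    (hH : ∀ x y, ‖H x - H y‖ ≤ (1 - m) * ‖x - y‖)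
    (T : EuclideanSpace ℂ (Fin M) → EuclideanSpace ℂ (Fin M))
    (hT : ∀ x, T x = appM ((1 + (α * lam) • (Aᴴ * A))⁻¹)
        ((1 - α) • x + α • H x)) :
    ∀ x y, ‖T x - T y‖ ≤
      Real.sqrt (1 - 2 * α * m + α ^ 2 * (2 - m) ^ 2) * ‖x - y‖ := by
  intro x y
  have hc : (0:ℝ) ≤ α * lam := le_of_lt (mul_pos hα hlam)
  have hsc : (α * lam) • (Aᴴ * A) = ((α * lam : ℝ) : ℂ) • (Aᴴ * A) := by
    ext i j
    simp [Matrix.smul_apply, Complex.real_smul]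
  set B := (1 + ((α * lam : ℝ) : ℂ) • (Aᴴ * A)) with hBdef
  have hTxy : T x - T y = Matrix.toEuclideanLin B⁻¹
      ((1 - α) • (x - y) + α • (H x - H y)) := by
    rw [hT x, hT y]
    show Matrix.toEuclideanLin _ _ - Matrix.toEuclideanLin _ _ = _
    rw [hsc, ← map_sub]
    congr 1
    module
  have hkey : ‖T x - T y‖ ≤ ‖(1 - α) • (x - y) + α • (H x - H y)‖ := by
    rw [hTxy]; exact appBinv_le A (α * lam) hc _
  have hnorm : ‖(1 - α) • (x - y) + α • (H x - H y)‖
      ≤ (|1 - α| + α * (1 - m)) * ‖x - y‖ := by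
    calc ‖(1 - α) • (x - y) + α • (H x - H y)‖
        ≤ ‖(1 - α) • (x - y)‖ + ‖α • (H x - H y)‖ := norm_add_le _ _
      _ = |1 - α| * ‖x - y‖ + α * ‖H x - H y‖ := by
          rw [norm_smul, norm_smul, Real.norm_eq_abs, Real.norm_eq_abs, abs_of_pos hα]
      _ ≤ |1 - α| * ‖x - y‖ + α * ((1 - m) * ‖x - y‖) := by
          have := hH x y
          nlinarith
      _ = (|1 - α| + α * (1 - m)) * ‖x - y‖ := by ring
  have hscal : |1 - α| + α * (1 - m) ≤ Real.sqrt (1 - 2 * α * m + α ^ 2 * (2 - m) ^ 2) := by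
    have ht : |1 - α| ≤ 1 + α := abs_le.mpr ⟨by linarith, by linarith⟩
    have ht2 : |1 - α| ^ 2 = (1 - α) ^ 2 := sq_abs _
    have hLnn : 0 ≤ |1 - α| + α * (1 - m) := by
      have := abs_nonneg (1 - α)
      nlinarith
    have hS : (0:ℝ) ≤ 1 - 2 * α * m + α ^ 2 * (2 - m) ^ 2 := by
      nlinarith [sq_nonneg (1 - α * m), sq_nonneg α]
    apply (Real.le_sqrt hLnn hS).mpr
    nlinarith [mul_nonneg (mul_nonneg hα.le (by linarith : (0:ℝ) ≤ 1 - m))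
      (by linarith : (0:ℝ) ≤ 1 + α - |1 - α|)]
  calc ‖T x - T y‖ ≤ (|1 - α| + α * (1 - m)) * ‖x - y‖ := le_trans hkey hnorm
    _ ≤ Real.sqrt (1 - 2 * α * m + α ^ 2 * (2 - m) ^ 2) * ‖x - y‖ :=
        mul_le_mul_of_nonneg_right hscal (norm_nonneg _)
end

section
/- Let A be an N × M complex matrix with operator norm at most 1, α, λ > 0, 0 < m < 1 with α < 2m/(2 − m)², and let H : ℂ^M → ℂ^M be Lipschitz with constant at most 1 − m. For b ∈ ℂ^N define T_MOL(x) = (I + αλ AᴴA)⁻¹((1 − α)x + αH(x)) and z(b) = (I + αλ AᴴA)⁻¹(αλ Aᴴb). Let b₁, b₂ ∈ ℂ^N with δ = b₂ − b₁, and let x*(b₁), x*(b₂) be fixed points: x*(bᵢ) = T_MOL(x*(bᵢ)) + z(bᵢ). Then with Δ = x*(b₂) − x*(b₁), ‖Δ‖ ≤ (αλ / (1 − √(1 − 2αm + α²(2 − m)²))) ‖δ‖. -/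
open Matrix

lemma appM_mul {N M K : ℕ} (A : Matrix (Fin N) (Fin M) ℂ) (B : Matrix (Fin M) (Fin K) ℂ)
    (x : EuclideanSpace ℂ (Fin K)) : appM (A * B) x = appM A (appM B x) := by
  simp [appM, Matrix.toEuclideanLin_apply, Matrix.mulVec_mulVec]

lemma appM_one {M : ℕ} (x : EuclideanSpace ℂ (Fin M)) : appM (1 : Matrix (Fin M) (Fin M) ℂ) x = x := by
  simp [appM, Matrix.toEuclideanLin_apply, Matrix.one_mulVec]

/-- `‖x‖ ≤ ‖(1 + c • AᴴA) x‖` for `c ≥ 0`. -/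
lemma norm_le_appM_S {N M : ℕ} (A : Matrix (Fin N) (Fin M) ℂ) (c : ℝ) (hc : 0 ≤ c)
    (y : EuclideanSpace ℂ (Fin M)) :
    ‖y‖ ≤ ‖appM (1 + c • (Aᴴ * A)) y‖ := by
  rcases eq_or_ne y 0 with rfl | hy
  · simp
  have hSy : appM (1 + c • (Aᴴ * A)) y = y + c • appM (Aᴴ * A) y := by
    simp only [appM, Matrix.toEuclideanLin_apply, Matrix.add_mulVec, Matrix.one_mulVec,
      Matrix.smul_mulVec]
    rfl
  have hinner : RCLike.re (inner ℂ y (appM (Aᴴ * A) y) : ℂ) = ‖appM A y‖ ^ 2 := by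
    have h1 : appM (Aᴴ * A) y = appM Aᴴ (appM A y) := appM_mul _ _ _
    have h2 : (inner ℂ y (appM Aᴴ (appM A y)) : ℂ) = inner ℂ (appM A y) (appM A y) := by
      simp only [appM, Matrix.toEuclideanLin_conjTranspose_eq_adjoint]
      exact LinearMap.adjoint_inner_right _ _ _
    rw [h1, h2, inner_self_eq_norm_sq]
  have key : ‖y‖ ^ 2 ≤ RCLike.re (inner ℂ y (appM (1 + c • (Aᴴ * A)) y) : ℂ) := by
    rw [hSy, inner_add_right, map_add]
    have : (inner ℂ y (c • appM (Aᴴ * A) y) : ℂ) = (c : ℂ) * inner ℂ y (appM (Aᴴ * A) y) := by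
      rw [← inner_smul_right]
      norm_cast
    rw [this]
    have h3 : RCLike.re ((c : ℂ) * inner ℂ y (appM (Aᴴ * A) y)) =
        c * RCLike.re (inner ℂ y (appM (Aᴴ * A) y) : ℂ) := by
      rw [hinner]
      have : (inner ℂ y (appM (Aᴴ * A) y) : ℂ) = ((‖appM A y‖ ^ 2 : ℝ) : ℂ) := by
        have h1 : appM (Aᴴ * A) y = appM Aᴴ (appM A y) := appM_mul _ _ _
        have h2 : (inner ℂ y (appM Aᴴ (appM A y)) : ℂ) = inner ℂ (appM A y) (appM A y) := by
          simp only [appM, Matrix.toEuclideanLin_conjTranspose_eq_adjoint]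
          exact LinearMap.adjoint_inner_right _ _ _
        rw [h1, h2, inner_self_eq_norm_sq_to_K]
        norm_cast
      rw [this]
      norm_cast
    rw [h3, hinner]
    have h4 : RCLike.re (inner ℂ y y : ℂ) = ‖y‖ ^ 2 := inner_self_eq_norm_sq y
    rw [h4]
    nlinarith [sq_nonneg ‖appM A y‖]
  have hCS : RCLike.re (inner ℂ y (appM (1 + c • (Aᴴ * A)) y) : ℂ) ≤
      ‖y‖ * ‖appM (1 + c • (Aᴴ * A)) y‖ := re_inner_le_norm _ _
  have hy0 : 0 < ‖y‖ := norm_pos_iff.mpr hy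
  nlinarith

/-- The inverse of `1 + c • AᴴA` is a contraction. -/
lemma appM_inv_contraction {N M : ℕ} (A : Matrix (Fin N) (Fin M) ℂ) (c : ℝ) (hc : 0 ≤ c)
    (y : EuclideanSpace ℂ (Fin M)) :
    ‖appM (1 + c • (Aᴴ * A))⁻¹ y‖ ≤ ‖y‖ := by
  set S : Matrix (Fin M) (Fin M) ℂ := 1 + c • (Aᴴ * A) with hS
  have hinj : Function.Injective (S.mulVec) := by
    intro u v huv
    have h : appM S ((WithLp.equiv 2 _).symm u) = appM S ((WithLp.equiv 2 _).symm v) := by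
      simp only [appM, Matrix.toEuclideanLin_apply]
      simp [huv]
    have := norm_le_appM_S A c hc ((WithLp.equiv 2 _).symm u - (WithLp.equiv 2 _).symm v)
    rw [show appM S ((WithLp.equiv 2 _).symm u - (WithLp.equiv 2 _).symm v)
        = appM S ((WithLp.equiv 2 _).symm u) - appM S ((WithLp.equiv 2 _).symm v) by
      simp only [appM]; rw [map_sub], h, sub_self, norm_zero] at this
    have h0 : (WithLp.equiv 2 _).symm u - (WithLp.equiv 2 _).symm v = (0 : EuclideanSpace ℂ (Fin M)) :=
      norm_le_zero_iff.mp this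
    have : (WithLp.equiv 2 _).symm u = ((WithLp.equiv 2 _).symm v : EuclideanSpace ℂ (Fin M)) :=
      sub_eq_zero.mp h0
    exact (WithLp.equiv 2 _).symm.injective this
  have hunit : IsUnit S := Matrix.mulVec_injective_iff_isUnit.mp hinj
  have hmul : S * S⁻¹ = 1 := Matrix.mul_nonsing_inv S ((Matrix.isUnit_iff_isUnit_det S).mp hunit)
  have hid : appM S (appM S⁻¹ y) = y := by
    rw [← appM_mul, hmul, appM_one]
  calc ‖appM S⁻¹ y‖ ≤ ‖appM S (appM S⁻¹ y)‖ := norm_le_appM_S A c hc _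
    _ = ‖y‖ := by rw [hid]

lemma appM_conjTranspose_le {N M : ℕ} (A : Matrix (Fin N) (Fin M) ℂ)
    (hA : ∀ x : EuclideanSpace ℂ (Fin M), ‖appM A x‖ ≤ ‖x‖)
    (b : EuclideanSpace ℂ (Fin N)) : ‖appM Aᴴ b‖ ≤ ‖b‖ := by
  rcases le_or_gt ‖appM Aᴴ b‖ 0 with h | h
  · exact h.trans (norm_nonneg b)
  have h2 : (inner ℂ (appM Aᴴ b) (appM Aᴴ b) : ℂ) = inner ℂ (appM A (appM Aᴴ b)) b := by
    simp only [appM, Matrix.toEuclideanLin_conjTranspose_eq_adjoint]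
    exact LinearMap.adjoint_inner_right (Matrix.toEuclideanLin A) _ _
  have h1 : ‖appM Aᴴ b‖ ^ 2 = RCLike.re (inner ℂ (appM A (appM Aᴴ b)) b : ℂ) := by
    rw [← h2]
    exact (inner_self_eq_norm_sq _).symm
  have h3 : RCLike.re (inner ℂ (appM A (appM Aᴴ b)) b : ℂ) ≤ ‖appM A (appM Aᴴ b)‖ * ‖b‖ :=
    re_inner_le_norm _ _
  have h4 : ‖appM A (appM Aᴴ b)‖ ≤ ‖appM Aᴴ b‖ := hA _
  nlinarith [norm_nonneg b]

set_option maxHeartbeats 1000000 in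
/-- Robustness of MOL fixed points to measurement perturbations:
with `δ = b₂ − b₁` and `Δ = x*(b₂) − x*(b₁)`,
`‖Δ‖ ≤ (αλ / (1 − √(1 − 2αm + α²(2 − m)²))) ‖δ‖`. -/
theorem stmt16 {N M : ℕ} (A : Matrix (Fin N) (Fin M) ℂ)
    (hA : ∀ x : EuclideanSpace ℂ (Fin M), ‖appM A x‖ ≤ ‖x‖)
    (α lam m : ℝ) (hα : 0 < α) (hlam : 0 < lam) (hm0 : 0 < m) (hm1 : m < 1)
    (hαcond : α < 2 * m / (2 - m) ^ 2)
    (H : EuclideanSpace ℂ (Fin M) → EuclideanSpace ℂ (Fin M))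
    (hH : ∀ x y, ‖H x - H y‖ ≤ (1 - m) * ‖x - y‖)
    (T : EuclideanSpace ℂ (Fin M) → EuclideanSpace ℂ (Fin M))
    (hT : ∀ x, T x = appM ((1 + (α * lam) • (Aᴴ * A))⁻¹)
        ((1 - α) • x + α • H x))
    (z : EuclideanSpace ℂ (Fin N) → EuclideanSpace ℂ (Fin M))
    (hz : ∀ b, z b = appM ((1 + (α * lam) • (Aᴴ * A))⁻¹)
        ((α * lam) • appM Aᴴ b))
    (b₁ b₂ : EuclideanSpace ℂ (Fin N))
    (x₁ x₂ : EuclideanSpace ℂ (Fin M))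
    (h₁ : x₁ = T x₁ + z b₁) (h₂ : x₂ = T x₂ + z b₂) :
    ‖x₂ - x₁‖ ≤
      α * lam / (1 - Real.sqrt (1 - 2 * α * m + α ^ 2 * (2 - m) ^ 2)) *
        ‖b₂ - b₁‖ := by
  have hc : (0 : ℝ) ≤ α * lam := le_of_lt (mul_pos hα hlam)
  set t : ℝ := 1 - 2 * α * m + α ^ 2 * (2 - m) ^ 2 with ht
  set k : ℝ := |1 - α| + α * (1 - m) with hk
  have hk0 : 0 ≤ k := add_nonneg (abs_nonneg _) (by nlinarith)
  have hk2 : k ^ 2 ≤ t := by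
    rcases abs_cases (1 - α) with ⟨h, _⟩ | ⟨h, _⟩ <;> rw [hk, h] <;> nlinarith
  have ht0 : 0 ≤ t := le_trans (sq_nonneg k) hk2
  have hkq : k ≤ Real.sqrt t := (Real.le_sqrt hk0 ht0).mpr hk2
  have ht1 : t < 1 := by
    have h2m : (0 : ℝ) < (2 - m) ^ 2 := by nlinarith
    have := (lt_div_iff₀ h2m).mp hαcond
    nlinarith
  have hq1 : Real.sqrt t < 1 := (Real.sqrt_lt' one_pos).mpr (by linarith)
  have hq0 : 0 ≤ Real.sqrt t := Real.sqrt_nonneg t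
  -- Lipschitz bound on T
  have hTlip : ‖T x₂ - T x₁‖ ≤ k * ‖x₂ - x₁‖ := by
    rw [hT x₂, hT x₁]
    have hdiff : appM (1 + (α * lam) • (Aᴴ * A))⁻¹ ((1 - α) • x₂ + α • H x₂) -
        appM (1 + (α * lam) • (Aᴴ * A))⁻¹ ((1 - α) • x₁ + α • H x₁) =
        appM (1 + (α * lam) • (Aᴴ * A))⁻¹
          ((1 - α) • (x₂ - x₁) + α • (H x₂ - H x₁)) := by
      have earg : ((1 - α) • x₂ + α • H x₂) - ((1 - α) • x₁ + α • H x₁)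
          = (1 - α) • (x₂ - x₁) + α • (H x₂ - H x₁) := by
        rw [smul_sub, smul_sub]; abel
      simp only [appM]
      rw [← map_sub, earg]
    rw [hdiff]
    calc ‖appM (1 + (α * lam) • (Aᴴ * A))⁻¹ ((1 - α) • (x₂ - x₁) + α • (H x₂ - H x₁))‖
        ≤ ‖(1 - α) • (x₂ - x₁) + α • (H x₂ - H x₁)‖ := appM_inv_contraction A _ hc _
      _ ≤ ‖(1 - α) • (x₂ - x₁)‖ + ‖α • (H x₂ - H x₁)‖ := norm_add_le _ _
      _ ≤ |1 - α| * ‖x₂ - x₁‖ + α * ((1 - m) * ‖x₂ - x₁‖) := by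
          rw [norm_smul, norm_smul, Real.norm_eq_abs, Real.norm_eq_abs,
            abs_of_pos hα]
          gcongr
          exact hH x₂ x₁
      _ = k * ‖x₂ - x₁‖ := by rw [hk]; ring
  -- bound on z
  have hzlip : ‖z b₂ - z b₁‖ ≤ α * lam * ‖b₂ - b₁‖ := by
    rw [hz b₂, hz b₁]
    have hdiff : appM (1 + (α * lam) • (Aᴴ * A))⁻¹ ((α * lam) • appM Aᴴ b₂) -
        appM (1 + (α * lam) • (Aᴴ * A))⁻¹ ((α * lam) • appM Aᴴ b₁) =
        appM (1 + (α * lam) • (Aᴴ * A))⁻¹ ((α * lam) • appM Aᴴ (b₂ - b₁)) := by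
      have e1 : appM Aᴴ (b₂ - b₁) = appM Aᴴ b₂ - appM Aᴴ b₁ := by
        simp only [appM]; rw [map_sub]
      simp only [appM] at e1 ⊢
      rw [← map_sub, ← smul_sub, e1]
    rw [hdiff]
    calc ‖appM (1 + (α * lam) • (Aᴴ * A))⁻¹ ((α * lam) • appM Aᴴ (b₂ - b₁))‖
        ≤ ‖(α * lam) • appM Aᴴ (b₂ - b₁)‖ := appM_inv_contraction A _ hc _
      _ = (α * lam) * ‖appM Aᴴ (b₂ - b₁)‖ := by
          rw [norm_smul, Real.norm_eq_abs, abs_of_nonneg hc]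
      _ ≤ α * lam * ‖b₂ - b₁‖ := by
          gcongr
          exact appM_conjTranspose_le A hA _
  have hΔ : x₂ - x₁ = (T x₂ - T x₁) + (z b₂ - z b₁) := by
    conv_lhs => rw [h₂, h₁]
    abel
  have hmain : ‖x₂ - x₁‖ ≤ Real.sqrt t * ‖x₂ - x₁‖ + α * lam * ‖b₂ - b₁‖ := by
    calc ‖x₂ - x₁‖ = ‖(T x₂ - T x₁) + (z b₂ - z b₁)‖ := by rw [← hΔ]
      _ ≤ ‖T x₂ - T x₁‖ + ‖z b₂ - z b₁‖ := norm_add_le _ _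
      _ ≤ k * ‖x₂ - x₁‖ + α * lam * ‖b₂ - b₁‖ := by gcongr
      _ ≤ Real.sqrt t * ‖x₂ - x₁‖ + α * lam * ‖b₂ - b₁‖ := by
          gcongr
  have h1q : 0 < 1 - Real.sqrt t := by linarith
  rw [div_mul_eq_mul_div, le_div_iff₀ h1q]
  nlinarith [norm_nonneg (x₂ - x₁), norm_nonneg (b₂ - b₁)]
end
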